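/- Let G be a parity game and let ρ̄ be the least game parity progress measure of G. Then for every vertex v ∈ V there exists a positional strategy σ for player Even such that every play π starting at v and consistent with σ satisfies θ(π) ≤ ρ̄(v), where elements of M_Even are compared with values in M_Even_ext in the order of M_Even_ext. -/

import Mathlib

open Classical

noncomputable section

instance (priority := 5000) (n : ℕ) : WellFoundedLT (Fin n) :=
  Finite.to_wellFoundedLT

noncomputable instance (priority := 5000) (n : ℕ) : LinearOrder (Lex (Fin n → ℕ)) :=
  inferInstance

/-- Least element of a set, if it exists; otherwise a default value. -/
def sLeast {α : Type*} [Preorder α] (s : Set α) (dflt : α) : α :=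
  if h : ∃ a, IsLeast s a then h.choose else dflt

/-- Greatest element of a set, if it exists; otherwise a default value. -/
def sGreatest {α : Type*} [Preorder α] (s : Set α) (dflt : α) : α :=
  if h : ∃ a, IsGreatest s a then h.choose else dflt

/-- A parity game: a finite set of vertices with a total edge relation, a priority
function and an ownership function (`ownerEven v = true` iff `v ∈ V_Even`). -/
structure ParityGame (V : Type*) [Fintype V] where
  E : V → V → Prop
  total : ∀ v, ∃ w, E v w
  prio : V → ℕ
  ownerEven : V → Bool

namespace ParityGame

variable {V : Type*} [Fintype V] [DecidableEq V] (G : ParityGame V)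

/-- `d` is one plus the maximal priority occurring in the game. -/
def d : ℕ := (Finset.univ.sup G.prio) + 1

/-- The domain of (extended) measures: `⊤` together with `d`-tuples of naturals,
ordered lexicographically with `⊤` maximal.  This is `M_Even_ext` (together with
tuples that are nonzero at even positions, which are never used). -/
abbrev Meas : Type _ := WithTop (Lex (Fin G.d → ℕ))

/-- `nP i` is the number of vertices of priority `i`. -/
def nP (i : ℕ) : ℕ := (Finset.univ.filter (fun v => G.prio v = i)).card

/-- Membership in `M_Even`: `⊤`, or a `d`-tuple which is `0` at even positions and
bounded by `nP i` at odd positions `i`. -/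
def inMEven (m : G.Meas) : Prop :=
  m = ⊤ ∨ ∃ f : Fin G.d → ℕ, m = ((toLex f : Lex (Fin G.d → ℕ)) : G.Meas) ∧
    ∀ i : Fin G.d, (Even (i : ℕ) → f i = 0) ∧ (¬ Even (i : ℕ) → f i ≤ G.nP (i : ℕ))

/-- Membership in `M_Even_ext`: `⊤`, or a `d`-tuple which is `0` at even positions. -/
def inMEvenExt (m : G.Meas) : Prop :=
  m = ⊤ ∨ ∃ f : Fin G.d → ℕ, m = ((toLex f : Lex (Fin G.d → ℕ)) : G.Meas) ∧
    ∀ i : Fin G.d, Even (i : ℕ) → f i = 0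

/-- Truncation of a measure to components `0, …, k` (other components set to `0`);
`⊤` is mapped to `⊤`. -/
def trunc (k : ℕ) (m : G.Meas) : G.Meas :=
  WithTop.map (fun f : Lex (Fin G.d → ℕ) => toLex (fun j : Fin G.d => if (j : ℕ) ≤ k then ofLex f j else 0)) m

/-- `a ≥_k b` : comparison of measures on components `0, …, k` only. -/
def geAt (k : ℕ) (a b : G.Meas) : Prop := G.trunc k b ≤ G.trunc k a

/-- `a >_k b` : strict comparison of measures on components `0, …, k` only. -/
def gtAt (k : ℕ) (a b : G.Meas) : Prop := G.trunc k b < G.trunc k a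

/-- The defining condition of `Prog(ρ,v,w)`. -/
def progCond (ρ : V → G.Meas) (v w : V) (m : G.Meas) : Prop :=
  if Even (G.prio v) then G.geAt (G.prio v) m (ρ w)
  else (G.gtAt (G.prio v) m (ρ w) ∨ (m = ⊤ ∧ ρ w = ⊤))

/-- `Prog(ρ,v,w)`: the least element of `M_Even` satisfying `progCond`. -/
def Prog (ρ : V → G.Meas) (v w : V) : G.Meas :=
  if h : ∃ m, IsLeast {m | G.inMEven m ∧ G.progCond ρ v w m} m then h.choose else ⊤

/-- `ρ` takes values in `M_Even`. -/
def IsMeasure (ρ : V → G.Meas) : Prop := ∀ v, G.inMEven (ρ v)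

/-- Game parity progress measure. -/
def IsGPM (ρ : V → G.Meas) : Prop :=
  G.IsMeasure ρ ∧ ∀ v,
    (G.ownerEven v = true → ∃ w, G.E v w ∧ G.geAt (G.prio v) (ρ v) (G.Prog ρ v w)) ∧
    (G.ownerEven v = false → ∀ w, G.E v w → G.geAt (G.prio v) (ρ v) (G.Prog ρ v w))

/-- A play: an infinite `E`-path. -/
def IsPlay (π : ℕ → V) : Prop := ∀ n, G.E (π n) (π (n + 1))

/-- Priority `p` occurs infinitely often on `π`. -/
def InfOft (π : ℕ → V) (p : ℕ) : Prop := ∀ N, ∃ n, N ≤ n ∧ G.prio (π n) = p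

/-- A play is won by Even iff the least priority occurring infinitely often is even. -/
def WonByEven (π : ℕ → V) : Prop := Even (sInf {p | G.InfOft π p})

/-- Won by player `i` (`true` = Even, `false` = Odd). -/
def WonBy (i : Bool) (π : ℕ → V) : Prop :=
  if i then G.WonByEven π else ¬ G.WonByEven π

/-- The history of a play before time `n`. -/
def hist (π : ℕ → V) (n : ℕ) : List V := List.ofFn (fun k : Fin n => π (k : ℕ))

/-- A (history-dependent) strategy for player `i` is valid if it always moves along edges
from vertices of player `i`. -/
def ValidStrat (i : Bool) (σ : List V → V → V) : Prop :=
  ∀ h v, G.ownerEven v = i → G.E v (σ h v)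

/-- Consistency of a play with a history-dependent strategy of player `i`. -/
def ConsH (i : Bool) (σ : List V → V → V) (π : ℕ → V) : Prop :=
  ∀ n, G.ownerEven (π n) = i → π (n + 1) = σ (hist π n) (π n)

/-- Consistency of a play with a positional strategy of player `i`. -/
def ConsP (i : Bool) (σ : V → V) (π : ℕ → V) : Prop :=
  ∀ n, G.ownerEven (π n) = i → π (n + 1) = σ (π n)

/-- Winning region of player `i`: vertices from which `i` has a winning strategy. -/
def WinRegion (i : Bool) : Set V :=
  {v | ∃ σ : List V → V → V, G.ValidStrat i σ ∧
    ∀ π, G.IsPlay π → π 0 = v → G.ConsH i σ π → G.WonBy i π}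

/-- The `i`-attractor into `U`. -/
def Attr (i : Bool) (U : Set V) : Set V :=
  ⋂₀ {A | U ⊆ A ∧
    (∀ v, G.ownerEven v = i → (∃ w, G.E v w ∧ w ∈ A) → v ∈ A) ∧
    (∀ v, G.ownerEven v ≠ i → (∀ w, G.E v w → w ∈ A) → v ∈ A)}

/-- The guarded attractor `Attr^{≥k}_{Odd,W}(U)`. -/
def GAttr (k : ℕ) (W U : Set V) : Set V :=
  ⋂₀ {A | U ⊆ A ∧ A ⊆ W ∩ {v | k ≤ G.prio v} ∧
    ∀ u ∈ W ∩ {v | k ≤ G.prio v},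
      (G.ownerEven u = false → (∃ w, G.E u w ∧ w ∈ A) → u ∈ A) ∧
      (G.ownerEven u = true → (∀ w, G.E u w → w ∈ W → w ∈ A) → u ∈ A)}

/-- The lifting operator `Lift(ρ, v)`. -/
def Lift (ρ : V → G.Meas) (v : V) : V → G.Meas :=
  Function.update ρ v
    (if G.ownerEven v = true
      then max (ρ v) (sLeast {m | ∃ w, G.E v w ∧ m = G.Prog ρ v w} ⊤)
      else max (ρ v) (sGreatest {m | ∃ w, G.E v w ∧ m = G.Prog ρ v w} ⊤))

/-- The all-zero measure. -/
def zeroMeas : G.Meas := ((toLex (fun _ : Fin G.d => 0) : Lex (Fin G.d → ℕ)) : G.Meas)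

/-- A lifting sequence `ρ₀, …, ρ_N` in which `v` is the first vertex lifted to `⊤`. -/
def FirstTop (ρs : ℕ → V → G.Meas) (N : ℕ) (v : V) : Prop :=
  (∀ u, ρs 0 u = G.zeroMeas) ∧
  (∀ j < N, ∃ u, ρs (j + 1) = G.Lift (ρs j) u ∧
    (∀ w, ρs j w ≤ ρs (j + 1) w) ∧ ρs j ≠ ρs (j + 1)) ∧
  (∀ j < N, ∀ w, ρs j w ≠ ⊤) ∧
  ρs N v = ⊤

/-- The prefix `π 0 … π l` of a play is an `i`-dominated stretch. -/
def domStretchPrefix (π : ℕ → V) (i l : ℕ) : Prop :=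
  (∀ m ≤ l, i ≤ G.prio (π m)) ∧ (∃ m ≤ l, G.prio (π m) = i)

/-- The degree of the prefix `π 0 … π l` with respect to priority `i`: the number of
its vertices of priority `i`. -/
def degree (π : ℕ → V) (i l : ℕ) : ℕ :=
  ((Finset.range (l + 1)).filter (fun m => G.prio (π m) = i)).card

/-- The value `θ(π)` of a play: `⊤` if `π` is won by Odd, and otherwise the tuple whose
component at each odd position `i` is the degree of the maximal `i`-dominated stretch
that is a prefix of `π` (and `0` if there is no such prefix). -/
def theta (π : ℕ → V) : G.Meas :=
  if G.WonByEven π then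
    ((toLex (fun j : Fin G.d =>
      if Even (j : ℕ) then 0
      else sSup {c | ∃ l, G.domStretchPrefix π (j : ℕ) l ∧ c = G.degree π (j : ℕ) l}) :
        Lex (Fin G.d → ℕ)) : G.Meas)
  else ⊤

/-- `U` is an `i`-dominion inside the subgame induced on `W`. -/
def IsDominionIn (W : Set V) (i : Bool) (U : Set V) : Prop :=
  ∃ σ : List V → V → V,
    (∀ h u, u ∈ W → G.ownerEven u = i → G.E u (σ h u) ∧ σ h u ∈ W) ∧
    ∀ π, G.IsPlay π → (∀ n, π n ∈ W) → π 0 ∈ U → G.ConsH i σ π →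
      (∀ n, π n ∈ U) ∧ G.WonBy i π

/-- `U` is an `i`-dominion in `G`. -/
def IsDominion (i : Bool) (U : Set V) : Prop := G.IsDominionIn Set.univ i U

/-- Winning region of player `i` in the subgame induced on `W`. -/
def WinIn (W : Set V) (i : Bool) : Set V :=
  {v | v ∈ W ∧ ∃ σ : List V → V → V,
    (∀ h u, u ∈ W → G.ownerEven u = i → G.E u (σ h u) ∧ σ h u ∈ W) ∧
    ∀ π, G.IsPlay π → (∀ n, π n ∈ W) → π 0 = v → G.ConsH i σ π → G.WonBy i π}

end ParityGame

open ParityGame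


section LexAux

variable {d : ℕ}

lemma lexlt_iff (f g : Fin d → ℕ) :
    toLex f < toLex g ↔ ∃ i, (∀ j, j < i → f j = g j) ∧ f i < g i := Iff.rfl

lemma lexle_iff (f g : Fin d → ℕ) :
    toLex f ≤ toLex g ↔ f = g ∨ ∃ i, (∀ j, j < i → f j = g j) ∧ f i < g i := by
  rw [le_iff_lt_or_eq, toLex.injective.eq_iff, or_comm]
  exact or_congr_right (lexlt_iff f g)

/-- restriction of a tuple to positions `≤ k`. -/
def res (k : ℕ) (f : Fin d → ℕ) : Fin d → ℕ := fun j => if (j : ℕ) ≤ k then f j else 0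

@[simp] lemma res_apply (k : ℕ) (f : Fin d → ℕ) (j : Fin d) :
    res k f j = if (j : ℕ) ≤ k then f j else 0 := rfl

lemma res_res {k' k : ℕ} (h : k' ≤ k) (f : Fin d → ℕ) : res k' (res k f) = res k' f := by
  funext j; simp only [res_apply]
  by_cases hj : (j : ℕ) ≤ k'
  · rw [if_pos hj, if_pos hj, if_pos (hj.trans h)]
  · rw [if_neg hj, if_neg hj]

lemma res_mono {f g : Fin d → ℕ} (h : toLex f ≤ toLex g) (k : ℕ) :
    toLex (res k f) ≤ toLex (res k g) := by
  rcases (lexle_iff f g).1 h with rfl | ⟨i, hbef, hlt⟩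
  · exact le_rfl
  by_cases hik : (i : ℕ) ≤ k
  · refine le_of_lt ((lexlt_iff _ _).2 ⟨i, fun j hj => ?_, ?_⟩)
    · show res k f j = res k g j
      simp only [res_apply]; rw [hbef j hj]
    · show res k f i < res k g i
      simp only [res_apply, if_pos hik]; exact hlt
  · refine le_of_eq ?_
    funext j
    show res k f j = res k g j
    simp only [res_apply]
    by_cases hj : (j : ℕ) ≤ k
    · rw [hbef j (Fin.lt_def.2 (lt_of_le_of_lt hj (lt_of_not_ge hik)))]
    · rw [if_neg hj, if_neg hj]

lemma res_le_of_le {k' k : ℕ} (hk : k' ≤ k) {f g : Fin d → ℕ}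
    (h : toLex (res k f) ≤ toLex (res k g)) :
    toLex (res k' f) ≤ toLex (res k' g) := by
  have := res_mono h k'
  rwa [res_res hk, res_res hk] at this

lemma exists_isLeast_of_nonempty {α : Type*} [LinearOrder α] [WellFoundedLT α]
    {S : Set α} (h : S.Nonempty) : ∃ m, IsLeast S m := by
  obtain ⟨m, hm, hmin⟩ := (IsWellFounded.wf (r := ((· < ·) : α → α → Prop))).has_min S h
  exact ⟨m, hm, fun b hb => not_lt.1 fun hlt => hmin b hb hlt⟩

end LexAux

namespace ParityGame

variable {V : Type*} [Fintype V] [DecidableEq V] (G : ParityGame V)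

set_option linter.unusedSectionVars false

lemma prio_lt_d (v : V) : G.prio v < G.d :=
  Nat.lt_succ_of_le (Finset.le_sup (Finset.mem_univ v))

lemma trunc_coe (k : ℕ) (f : Fin G.d → ℕ) :
    G.trunc k ((toLex f : Lex (Fin G.d → ℕ)) : G.Meas)
      = ((toLex (res k f) : Lex (Fin G.d → ℕ)) : G.Meas) := by
  rw [trunc, WithTop.map_coe]; rfl

lemma trunc_top (k : ℕ) : G.trunc k (⊤ : G.Meas) = ⊤ := rfl

lemma trunc_ne_top {k : ℕ} {m : G.Meas} (h : m ≠ ⊤) : G.trunc k m ≠ ⊤ := by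
  obtain ⟨x, rfl⟩ := WithTop.ne_top_iff_exists.1 h
  rw [trunc, WithTop.map_coe]
  exact WithTop.coe_ne_top

lemma progCond_top (ρ : V → G.Meas) (v w : V) : G.progCond ρ v w ⊤ := by
  unfold progCond
  split_ifs with h
  · show G.trunc (G.prio v) (ρ w) ≤ G.trunc (G.prio v) ⊤
    rw [trunc_top]; exact le_top
  · by_cases hw : ρ w = ⊤
    · exact Or.inr ⟨rfl, hw⟩
    · left
      show G.trunc (G.prio v) (ρ w) < G.trunc (G.prio v) ⊤
      rw [trunc_top]
      exact lt_top_iff_ne_top.2 (G.trunc_ne_top hw)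

lemma prog_spec (ρ : V → G.Meas) (v w : V) : G.progCond ρ v w (G.Prog ρ v w) := by
  have hne : ∃ m, IsLeast {m | G.inMEven m ∧ G.progCond ρ v w m} m :=
    exists_isLeast_of_nonempty ⟨⊤, Or.inl rfl, G.progCond_top ρ v w⟩
  rw [Prog, dif_pos hne]
  exact hne.choose_spec.1.2

lemma step_facts {ρ : V → G.Meas} {u w : V}
    (h : G.geAt (G.prio u) (ρ u) (G.Prog ρ u w)) (hu : ρ u ≠ ⊤) :
    ρ w ≠ ⊤ ∧ G.trunc (G.prio u) (ρ w) ≤ G.trunc (G.prio u) (ρ u) ∧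
      (¬ Even (G.prio u) → G.trunc (G.prio u) (ρ w) < G.trunc (G.prio u) (ρ u)) := by
  have hc := G.prog_spec ρ u w
  have hM : G.trunc (G.prio u) (G.Prog ρ u w) ≤ G.trunc (G.prio u) (ρ u) := h
  have htu : G.trunc (G.prio u) (ρ u) ≠ ⊤ := G.trunc_ne_top hu
  have hMt : G.Prog ρ u w ≠ ⊤ := by
    intro ht; rw [ht, trunc_top] at hM; exact htu (top_le_iff.1 hM)
  unfold progCond at hc
  by_cases hevn : Even (G.prio u)
  · rw [if_pos hevn] at hc
    have hw : G.trunc (G.prio u) (ρ w) ≤ G.trunc (G.prio u) (G.Prog ρ u w) := hc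
    have hwt : ρ w ≠ ⊤ := by
      intro ht; rw [ht, trunc_top] at hw
      exact G.trunc_ne_top hMt (top_le_iff.1 hw)
    exact ⟨hwt, hw.trans hM, fun hodd => absurd hevn hodd⟩
  · rw [if_neg hevn] at hc
    rcases hc with hc | ⟨hM2, -⟩
    · have hw : G.trunc (G.prio u) (ρ w) < G.trunc (G.prio u) (G.Prog ρ u w) := hc
      have hwt : ρ w ≠ ⊤ := by
        intro ht; rw [ht, trunc_top] at hw
        exact not_top_lt hw
      exact ⟨hwt, (hw.trans_le hM).le, fun _ => hw.trans_le hM⟩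
    · exact absurd hM2 hMt

/-- The activity predicate. -/
def actA (π : ℕ → V) (n j : ℕ) : Prop := ∀ m, m < n → j ≤ G.prio (π m)

/-- Count of `j`-priority vertices within the `j`-active region. -/
def cntA (π : ℕ → V) (n j : ℕ) : ℕ :=
  ((Finset.range n).filter
    (fun m => G.prio (π m) = j ∧ ∀ m', m' < m → j ≤ G.prio (π m'))).card

/-- The invariant tuple. -/
def gA (π : ℕ → V) (F : ℕ → Fin G.d → ℕ) (n : ℕ) : Fin G.d → ℕ := fun j =>
  if Even (j : ℕ) then 0
  else G.cntA π n (j : ℕ) + (if G.actA π n (j : ℕ) then F n j else 0)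

lemma actA_succ (π : ℕ → V) (n j : ℕ) :
    G.actA π (n+1) j ↔ (G.actA π n j ∧ j ≤ G.prio (π n)) := by
  constructor
  · exact fun h => ⟨fun m hm => h m (hm.trans (Nat.lt_succ_self n)), h n (Nat.lt_succ_self n)⟩
  · rintro ⟨h1, h2⟩ m hm
    rcases Nat.lt_succ_iff_lt_or_eq.1 hm with hm | rfl
    · exact h1 m hm
    · exact h2

lemma actA_anti (π : ℕ → V) {n : ℕ} {j j' : ℕ} (hjj' : j ≤ j') (h : G.actA π n j') :
    G.actA π n j := fun m hm => hjj'.trans (h m hm)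

lemma cntA_succ (π : ℕ → V) (n j : ℕ) :
    G.cntA π (n+1) j = G.cntA π n j +
      (if G.prio (π n) = j ∧ G.actA π n j then 1 else 0) := by
  unfold cntA actA
  rw [Finset.range_add_one, Finset.filter_insert]
  split_ifs with h
  · rw [Finset.card_insert_of_notMem]
    intro hmem
    exact Finset.notMem_range_self (Finset.mem_of_mem_filter _ hmem)
  · rw [Nat.add_zero]

lemma cntA_mono (π : ℕ → V) (j : ℕ) {n n' : ℕ} (h : n ≤ n') :
    G.cntA π n j ≤ G.cntA π n' j :=
  Finset.card_le_card (Finset.filter_subset_filter _ (Finset.range_subset_range.2 h))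

lemma aux_wins (π : ℕ → V) (F : ℕ → Fin G.d → ℕ)
    (hle : ∀ n, toLex (res (G.prio (π n)) (F (n+1))) ≤ toLex (res (G.prio (π n)) (F n)))
    (hlt : ∀ n, ¬ Even (G.prio (π n)) →
      toLex (res (G.prio (π n)) (F (n+1))) < toLex (res (G.prio (π n)) (F n))) :
    G.WonByEven π := by
  have hne : ∃ q, G.InfOft π q := by
    by_contra hS
    push_neg at hS
    have h1 : ∀ q, ∃ N, ∀ n, N ≤ n → G.prio (π n) ≠ q := by
      intro q
      have h2 := hS q
      unfold InfOft at h2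
      push_neg at h2
      exact h2
    choose Nf hNf using h1
    exact hNf (G.prio (π ((Finset.range G.d).sup Nf))) ((Finset.range G.d).sup Nf)
      (Finset.le_sup (Finset.mem_range.2 (G.prio_lt_d _))) rfl
  unfold WonByEven
  set q := sInf {p | G.InfOft π p} with hqdef
  have hqS : G.InfOft π q := Nat.sInf_mem hne
  by_contra hodd
  have h2 : ∀ q', ∃ N, ∀ n, N ≤ n → q' < q → G.prio (π n) ≠ q' := by
    intro q'
    by_cases hq' : q' < q
    · have hnotin : ¬ G.InfOft π q' := fun hmem =>
        absurd (Nat.sInf_le hmem) (not_le.2 hq')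
      unfold InfOft at hnotin
      push_neg at hnotin
      obtain ⟨N, hN⟩ := hnotin
      exact ⟨N, fun n hn _ => hN n hn⟩
    · exact ⟨0, fun n _ hlt' => absurd hlt' hq'⟩
  choose Nf2 hNf2 using h2
  set M := (Finset.range q).sup Nf2 with hMdef
  have hM : ∀ n, M ≤ n → q ≤ G.prio (π n) := by
    intro n hn
    by_contra hlt'
    push_neg at hlt'
    exact hNf2 (G.prio (π n)) n
      (le_trans (Finset.le_sup (Finset.mem_range.2 hlt')) hn) hlt' rfl
  set h : ℕ → Lex (Fin G.d → ℕ) := fun m => toLex (res q (F (M + m))) with hh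
  have hanti : Antitone h := by
    apply antitone_nat_of_succ_le
    intro m
    have h2 := res_le_of_le (hM (M + m) (Nat.le_add_right _ _)) (hle (M + m))
    exact h2
  obtain ⟨x, hxmem, hxmin⟩ :=
    (IsWellFounded.wf (r := ((· < ·) : Lex (Fin G.d → ℕ) → Lex (Fin G.d → ℕ) → Prop))).has_min
      (Set.range h) ⟨h 0, 0, rfl⟩
  obtain ⟨m0, rfl⟩ := hxmem
  obtain ⟨n, hn1, hn2⟩ := hqS (M + m0)
  have hdrop := hlt n (by rw [hn2]; exact hodd)
  rw [hn2] at hdrop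
  have hMn : M ≤ n := le_trans (Nat.le_add_right _ _) hn1
  have hm1 : M + (n - M) = n := Nat.add_sub_cancel' hMn
  have hd2 : h (n - M + 1) < h (n - M) := by
    show toLex (res q (F (M + (n - M + 1)))) < toLex (res q (F (M + (n - M))))
    rw [← Nat.add_assoc, hm1]
    exact hdrop
  have hm0le : m0 ≤ n - M := by omega
  exact hxmin (h (n - M + 1)) ⟨_, rfl⟩ (lt_of_lt_of_le hd2 (hanti hm0le))

lemma aux_gstep (π : ℕ → V) (F : ℕ → Fin G.d → ℕ)
    (hev : ∀ n (j : Fin G.d), Even (j : ℕ) → F n j = 0)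
    (hle : ∀ n, toLex (res (G.prio (π n)) (F (n+1))) ≤ toLex (res (G.prio (π n)) (F n)))
    (hlt : ∀ n, ¬ Even (G.prio (π n)) →
      toLex (res (G.prio (π n)) (F (n+1))) < toLex (res (G.prio (π n)) (F n)))
    (n : ℕ) :
    toLex (G.gA π F (n+1)) ≤ toLex (G.gA π F n) := by
  rcases (lexle_iff _ _).1 (hle n) with heq | ⟨i, hbef, hilt⟩
  · have heq' : ∀ j : Fin G.d, (j : ℕ) ≤ G.prio (π n) → F (n+1) j = F n j := by
      intro j hj
      have h2 := congrFun heq j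
      rwa [res_apply, res_apply, if_pos hj, if_pos hj] at h2
    have hpev : Even (G.prio (π n)) := by
      by_contra hodd
      have h2 := hlt n hodd
      rw [heq] at h2
      exact lt_irrefl _ h2
    apply Pi.toLex_monotone
    intro j
    show G.gA π F (n+1) j ≤ G.gA π F n j
    unfold gA
    by_cases hje : Even (j : ℕ)
    · rw [if_pos hje, if_pos hje]
    · rw [if_neg hje, if_neg hje]
      have hc : G.cntA π (n+1) (j:ℕ) = G.cntA π n (j:ℕ) := by
        rw [G.cntA_succ, if_neg, Nat.add_zero]
        rintro ⟨h1, -⟩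
        exact hje (h1 ▸ hpev)
      rw [hc]
      apply Nat.add_le_add_left
      by_cases hja : G.actA π (n+1) (j:ℕ)
      · rw [if_pos hja, if_pos ((G.actA_succ π n (j:ℕ)).1 hja).1,
          heq' j ((G.actA_succ π n (j:ℕ)).1 hja).2]
      · rw [if_neg hja]
        exact Nat.zero_le _
  · have hip : (i : ℕ) ≤ G.prio (π n) := by
      by_contra hc
      rw [res_apply, res_apply, if_neg hc, if_neg hc] at hilt
      exact lt_irrefl _ hilt
    have hFi : F (n+1) i < F n i := by
      rwa [res_apply, res_apply, if_pos hip, if_pos hip] at hilt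
    have hbef' : ∀ j : Fin G.d, j < i → F (n+1) j = F n j := by
      intro j hj
      have hjp : (j : ℕ) ≤ G.prio (π n) := le_of_lt (lt_of_lt_of_le (Fin.lt_def.1 hj) hip)
      have h2 := hbef j hj
      rwa [res_apply, res_apply, if_pos hjp, if_pos hjp] at h2
    have hiodd : ¬ Even (i : ℕ) := by
      intro he
      rw [hev n i he] at hFi
      exact Nat.not_lt_zero _ hFi
    have hgbef : ∀ j : Fin G.d, j < i → G.gA π F (n+1) j = G.gA π F n j := by
      intro j hj
      have hjlt : (j:ℕ) < (i:ℕ) := Fin.lt_def.1 hj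
      have hjp : (j : ℕ) ≤ G.prio (π n) := le_of_lt (lt_of_lt_of_le hjlt hip)
      unfold gA
      by_cases hje : Even (j : ℕ)
      · rw [if_pos hje, if_pos hje]
      · rw [if_neg hje, if_neg hje]
        have hc : G.cntA π (n+1) (j:ℕ) = G.cntA π n (j:ℕ) := by
          rw [G.cntA_succ, if_neg, Nat.add_zero]
          rintro ⟨h1, -⟩
          omega
        have hai : G.actA π (n+1) (j:ℕ) ↔ G.actA π n (j:ℕ) := by
          rw [G.actA_succ]
          exact and_iff_left hjp
        rw [hc, hbef' j hj]
        congr 1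
        by_cases hja : G.actA π n (j:ℕ)
        · rw [if_pos hja, if_pos (hai.2 hja)]
        · rw [if_neg hja, if_neg (fun hk => hja (hai.1 hk))]
    by_cases hA : G.actA π n (i : ℕ)
    · have hacti : G.actA π (n+1) (i:ℕ) := (G.actA_succ π n (i:ℕ)).2 ⟨hA, hip⟩
      have e1 : G.gA π F (n+1) i =
          G.cntA π n (i:ℕ) + (if G.prio (π n) = (i:ℕ) ∧ G.actA π n (i:ℕ) then 1 else 0)
            + F (n+1) i := by
        unfold gA
        rw [if_neg hiodd, if_pos hacti, G.cntA_succ]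
      have e2 : G.gA π F n i = G.cntA π n (i:ℕ) + F n i := by
        unfold gA
        rw [if_neg hiodd, if_pos hA]
      by_cases hpi : G.prio (π n) = (i : ℕ)
      · have hile : G.gA π F (n+1) i ≤ G.gA π F n i := by
          rw [e1, e2, if_pos ⟨hpi, hA⟩]
          omega
        rcases lt_or_eq_of_le hile with hlt'' | heq''
        · exact le_of_lt ((lexlt_iff _ _).2 ⟨i, hgbef, hlt''⟩)
        · apply Pi.toLex_monotone
          intro j
          rcases lt_trichotomy j i with hj | rfl | hj
          · exact le_of_eq (hgbef j hj)
          · exact le_of_eq heq''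
          · show G.gA π F (n+1) j ≤ G.gA π F n j
            have hji : (i:ℕ) < (j:ℕ) := Fin.lt_def.1 hj
            have hnact : ¬ G.actA π (n+1) (j:ℕ) := by
              intro hk
              have h3 := ((G.actA_succ π n (j:ℕ)).1 hk).2
              omega
            unfold gA
            by_cases hje : Even (j:ℕ)
            · rw [if_pos hje, if_pos hje]
            · rw [if_neg hje, if_neg hje, if_neg hnact, G.cntA_succ, if_neg, Nat.add_zero]
              · exact Nat.le_add_right _ _
              · rintro ⟨h1, -⟩
                omega
      · have hlt'' : G.gA π F (n+1) i < G.gA π F n i := by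
          rw [e1, e2, if_neg (fun hc => hpi hc.1)]
          omega
        exact le_of_lt ((lexlt_iff _ _).2 ⟨i, hgbef, hlt''⟩)
    · have hgeq : G.gA π F (n+1) = G.gA π F n := by
        funext j
        rcases lt_or_ge j i with hj | hj
        · exact hgbef j hj
        · have hji : (i:ℕ) ≤ (j:ℕ) := Fin.le_def.1 hj
          have hnact : ¬ G.actA π n (j:ℕ) := fun hk => hA (G.actA_anti π hji hk)
          have hnact' : ¬ G.actA π (n+1) (j:ℕ) := fun hk =>
            hnact ((G.actA_succ π n (j:ℕ)).1 hk).1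
          unfold gA
          by_cases hje : Even (j:ℕ)
          · rw [if_pos hje, if_pos hje]
          · rw [if_neg hje, if_neg hje, if_neg hnact, if_neg hnact', G.cntA_succ, if_neg,
              Nat.add_zero]
            rintro ⟨h1, h2⟩
            rw [← h1] at h2
            exact hA (G.actA_anti π hip h2)
      rw [hgeq]

lemma aux_val (π : ℕ → V) (F : ℕ → Fin G.d → ℕ)
    (hev : ∀ n (j : Fin G.d), Even (j : ℕ) → F n j = 0)
    (hle : ∀ n, toLex (res (G.prio (π n)) (F (n+1))) ≤ toLex (res (G.prio (π n)) (F n)))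
    (hlt : ∀ n, ¬ Even (G.prio (π n)) →
      toLex (res (G.prio (π n)) (F (n+1))) < toLex (res (G.prio (π n)) (F n)))
    (hwin : G.WonByEven π) :
    G.theta π ≤ ((toLex (F 0) : Lex (Fin G.d → ℕ)) : G.Meas) := by
  have hgle : ∀ n, toLex (G.gA π F n) ≤ toLex (F 0) := by
    have h0 : G.gA π F 0 = F 0 := by
      funext j
      unfold gA
      by_cases hje : Even (j:ℕ)
      · rw [if_pos hje, hev 0 j hje]
      · rw [if_neg hje,
          if_pos (show G.actA π 0 (j:ℕ) from fun m hm => absurd hm (Nat.not_lt_zero m))]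
        unfold cntA
        rw [Finset.range_zero, Finset.filter_empty, Finset.card_empty, Nat.zero_add]
    intro n
    induction n with
    | zero => rw [h0]
    | succ n ih => exact le_trans (G.aux_gstep π F hev hle hlt n) ih
  have hkey : ∀ j : Fin G.d, ∃ N, ∀ n, N ≤ n →
      (if Even (j:ℕ) then 0
        else sSup {c | ∃ l, G.domStretchPrefix π (j:ℕ) l ∧ c = G.degree π (j:ℕ) l})
        ≤ G.gA π F n j := by
    intro j
    by_cases hje : Even (j:ℕ)
    · exact ⟨0, fun n _ => by rw [if_pos hje]; exact Nat.zero_le _⟩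
    · have hcg : ∀ n, G.cntA π n (j:ℕ) ≤ G.gA π F n j := by
        intro n
        unfold gA
        rw [if_neg hje]
        exact Nat.le_add_right _ _
      have hSsub : ∀ c ∈ {c | ∃ l, G.domStretchPrefix π (j:ℕ) l ∧ c = G.degree π (j:ℕ) l},
          ∃ l, c = G.cntA π (l+1) (j:ℕ) := by
        rintro c ⟨l, ⟨hdom1, hdom2⟩, rfl⟩
        refine ⟨l, ?_⟩
        unfold degree cntA
        congr 1
        apply Finset.filter_congr
        intro m hm
        rw [Finset.mem_range, Nat.lt_succ_iff] at hm
        constructor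
        · intro h1
          exact ⟨h1, fun m' hm' => hdom1 m' (le_of_lt (lt_of_lt_of_le hm' hm))⟩
        · exact fun h1 => h1.1
      rw [if_neg hje]
      by_cases hSb : BddAbove {c | ∃ l, G.domStretchPrefix π (j:ℕ) l ∧ c = G.degree π (j:ℕ) l}
      · by_cases hSne :
            {c | ∃ l, G.domStretchPrefix π (j:ℕ) l ∧ c = G.degree π (j:ℕ) l}.Nonempty
        · obtain ⟨l, hl⟩ := hSsub _ (Nat.sSup_mem hSne hSb)
          refine ⟨l+1, fun n hn => ?_⟩
          rw [hl]
          exact le_trans (G.cntA_mono π (j:ℕ) hn) (hcg n)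
        · rw [Set.not_nonempty_iff_eq_empty.1 hSne]
          refine ⟨0, fun n _ => ?_⟩
          rw [csSup_empty]
          exact bot_le
      · refine ⟨0, fun n _ => ?_⟩
        rw [csSup_of_not_bddAbove hSb, csSup_empty]
        exact bot_le
  choose Nf hNf using hkey
  set N := (Finset.univ : Finset (Fin G.d)).sup Nf with hNdef
  have hcomp : ∀ j : Fin G.d,
      (if Even (j:ℕ) then 0
        else sSup {c | ∃ l, G.domStretchPrefix π (j:ℕ) l ∧ c = G.degree π (j:ℕ) l})
        ≤ G.gA π F N j :=
    fun j => hNf j N (Finset.le_sup (Finset.mem_univ j))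
  unfold theta
  rw [if_pos hwin]
  exact WithTop.coe_le_coe.2
    (le_trans (Pi.toLex_monotone (fun j => hcomp j)) (hgle N))

end ParityGame

/-- player Even has a positional strategy from any `v` guaranteeing a
play value at most `ρ̄(v)`. -/
theorem even_positional_strategy_value_at_most_least_measure
    {V : Type*} [Fintype V] [DecidableEq V] (G : ParityGame V)
    (ρbar : V → G.Meas) (hgpm : G.IsGPM ρbar)
    (hleast : ∀ ρ : V → G.Meas, G.IsGPM ρ → ∀ v, ρbar v ≤ ρ v) :
    ∀ v : V, ∃ σ : V → V, (∀ u, G.ownerEven u = true → G.E u (σ u)) ∧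
      ∀ π : ℕ → V, G.IsPlay π → π 0 = v → G.ConsP true σ π →
        G.theta π ≤ ρbar v := by
  intro v
  set σ : V → V := fun u =>
    if h : G.ownerEven u = true then ((hgpm.2 u).1 h).choose else (G.total u).choose with hσ
  have hσE : ∀ u, G.ownerEven u = true → G.E u (σ u) := by
    intro u hu
    rw [hσ]
    simp only
    rw [dif_pos hu]
    exact ((hgpm.2 u).1 hu).choose_spec.1
  have hσge : ∀ u, G.ownerEven u = true →
      G.geAt (G.prio u) (ρbar u) (G.Prog ρbar u (σ u)) := by
    intro u hu
    have h2 := ((hgpm.2 u).1 hu).choose_spec.2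
    rw [hσ]
    simp only
    rw [dif_pos hu]
    exact h2
  refine ⟨σ, hσE, ?_⟩
  intro π hplay h0 hcons
  by_cases hv : ρbar v = ⊤
  · rw [hv]
    exact le_top
  · have hgeat : ∀ n, G.geAt (G.prio (π n)) (ρbar (π n)) (G.Prog ρbar (π n) (π (n+1))) := by
      intro n
      by_cases ho : G.ownerEven (π n) = true
      · rw [hcons n ho]
        exact hσge (π n) ho
      · have ho' : G.ownerEven (π n) = false := by
          cases hb : G.ownerEven (π n)
          · rfl
          · exact absurd hb ho
        exact (hgpm.2 (π n)).2 ho' (π (n+1)) (hplay n)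
    have hnt : ∀ n, ρbar (π n) ≠ ⊤ := by
      intro n
      induction n with
      | zero => rw [h0]; exact hv
      | succ n ih => exact (G.step_facts (hgeat n) ih).1
    set F : ℕ → Fin G.d → ℕ := fun n => ofLex ((ρbar (π n)).untop (hnt n)) with hFdef
    have hFc : ∀ n, ρbar (π n) = ((toLex (F n) : Lex (Fin G.d → ℕ)) : G.Meas) := by
      intro n
      rw [hFdef]
      simp only [toLex_ofLex]
      exact (WithTop.coe_untop _ _).symm
    have hFev : ∀ n (j : Fin G.d), Even (j:ℕ) → F n j = 0 := by
      intro n j hje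
      rcases hgpm.1 (π n) with htop | ⟨f', heq, hpr⟩
      · exact absurd htop (hnt n)
      · have hfe : F n = f' := by
          have h2 := hFc n
          rw [heq] at h2
          exact (toLex.injective (WithTop.coe_inj.1 h2)).symm
        rw [hfe]
        exact (hpr j).1 hje
    have hle : ∀ n, toLex (res (G.prio (π n)) (F (n+1))) ≤ toLex (res (G.prio (π n)) (F n)) := by
      intro n
      have h2 := (G.step_facts (hgeat n) (hnt n)).2.1
      rw [hFc n, hFc (n+1), G.trunc_coe, G.trunc_coe] at h2
      exact WithTop.coe_le_coe.1 h2
    have hlt : ∀ n, ¬ Even (G.prio (π n)) →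
        toLex (res (G.prio (π n)) (F (n+1))) < toLex (res (G.prio (π n)) (F n)) := by
      intro n hodd
      have h2 := (G.step_facts (hgeat n) (hnt n)).2.2 hodd
      rw [hFc n, hFc (n+1), G.trunc_coe, G.trunc_coe] at h2
      exact WithTop.coe_lt_coe.1 h2
    have hwin := G.aux_wins π F hle hlt
    have hval := G.aux_val π F hFev hle hlt hwin
    rw [← h0, hFc 0]
    exact hval

end
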